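/- The set 𝒞₂ := (⋃_{n∈ℕ} {t • u_n : t ∈ ℝ, 0 < t ≤ t_n}) ∪ {0} is bounded, connected, and disjoint from the unit sphere 𝒞₁ := {u ∈ U : ‖u‖ = 1}. -/

import Mathlib

/-- The set `𝒞₂ = (⋃ n, {t • uₙ : 0 < t ≤ tₙ}) ∪ {0}`, built from a sequence of
unit vectors `uₙ` with mutual distances `≥ 1/2` and `tₙ = 1 - 1/(n+1)`, is bounded,
connected and disjoint from the unit sphere `𝒞₁ = {u : ‖u‖ = 1}`. -/
theorem C2_bounded_connected_disjoint {U : Type*} [NormedAddCommGroup U]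
    [NormedSpace ℝ U] [CompleteSpace U] (hU : ¬ FiniteDimensional ℝ U)
    (u : ℕ → U) (hnorm : ∀ n, ‖u n‖ = 1)
    (hsep : ∀ n m, n ≠ m → (1 : ℝ) / 2 ≤ ‖u n - u m‖) :
    Bornology.IsBounded ((⋃ n : ℕ, {x : U | ∃ t : ℝ, 0 < t ∧
        t ≤ 1 - 1 / ((n : ℝ) + 1) ∧ x = t • u n}) ∪ {(0 : U)}) ∧
    IsConnected ((⋃ n : ℕ, {x : U | ∃ t : ℝ, 0 < t ∧
        t ≤ 1 - 1 / ((n : ℝ) + 1) ∧ x = t • u n}) ∪ {(0 : U)}) ∧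
    Disjoint {v : U | ‖v‖ = 1}
      ((⋃ n : ℕ, {x : U | ∃ t : ℝ, 0 < t ∧
        t ≤ 1 - 1 / ((n : ℝ) + 1) ∧ x = t • u n}) ∪ {(0 : U)}) := by
  set S := (⋃ n : ℕ, {x : U | ∃ t : ℝ, 0 < t ∧
      t ≤ 1 - 1 / ((n : ℝ) + 1) ∧ x = t • u n}) ∪ {(0 : U)} with hS
  have hc0 : ∀ n : ℕ, (0:ℝ) ≤ 1 - 1 / ((n : ℝ) + 1) := by
    intro n
    have : (1:ℝ) / ((n : ℝ) + 1) ≤ 1 := by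
      rw [div_le_one (by positivity)]; linarith [Nat.cast_nonneg (α := ℝ) n]
    linarith
  have hnormlt : ∀ x ∈ S, ‖x‖ < 1 := by
    intro x hx
    rcases hx with hx | hx
    · rcases Set.mem_iUnion.1 hx with ⟨n, t, ht0, htn, rfl⟩
      have h1 : (0:ℝ) < 1 / ((n : ℝ) + 1) := by positivity
      have : t < 1 := by linarith
      rw [norm_smul, hnorm n, mul_one, Real.norm_eq_abs, abs_of_pos ht0]
      exact this
    · simp only [Set.mem_singleton_iff] at hx
      simp [hx]
  have hseg : S = ⋃ n : ℕ, segment ℝ (0 : U) ((1 - 1 / ((n : ℝ) + 1)) • u n) := by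
    ext x
    simp only [hS, Set.mem_union, Set.mem_iUnion, Set.mem_setOf_eq,
      Set.mem_singleton_iff]
    constructor
    · rintro (⟨n, t, ht0, htn, rfl⟩ | rfl)
      · refine ⟨n, ?_⟩
        have h1 : (0:ℝ) < 1 / ((n : ℝ) + 1) := by positivity
        have htn' : (0:ℝ) < 1 - 1 / ((n : ℝ) + 1) := lt_of_lt_of_le ht0 htn
        rw [segment_eq_image]
        refine ⟨t / (1 - 1 / ((n : ℝ) + 1)), ⟨by positivity, by
          rw [div_le_one htn']; exact htn⟩, ?_⟩
        show (1 - _) • (0:U) + _ = _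
        rw [smul_zero, zero_add, smul_smul, div_mul_cancel₀ _ htn'.ne']
      · exact ⟨0, left_mem_segment ℝ _ _⟩
    · rintro ⟨n, hx⟩
      rw [segment_eq_image] at hx
      obtain ⟨s, ⟨hs0, hs1⟩, rfl⟩ := hx
      simp only [smul_zero, zero_add, smul_smul]
      set c := 1 - 1 / ((n : ℝ) + 1) with hc
      rcases eq_or_lt_of_le (mul_nonneg hs0 (hc0 n)) with h | h
      · right; rw [← hc] at h; simp [← h]
      · left
        refine ⟨n, s * c, h, ?_, rfl⟩
        nlinarith [hc0 n]
  refine ⟨?_, ?_, ?_⟩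
  · exact (Metric.isBounded_iff_subset_closedBall 0).2 ⟨1, fun x hx => by
      simpa [Metric.mem_closedBall, dist_eq_norm] using (hnormlt x hx).le⟩
  · rw [hseg]
    have hconn : IsPreconnected (⋃ n : ℕ, segment ℝ (0 : U)
        ((1 - 1 / ((n : ℝ) + 1)) • u n)) := by
      apply isPreconnected_iUnion
      · exact ⟨0, Set.mem_iInter.2 fun n => left_mem_segment ℝ _ _⟩
      · intro n; exact (convex_segment _ _).isPreconnected
    exact ⟨⟨0, Set.mem_iUnion.2 ⟨0, left_mem_segment ℝ _ _⟩⟩, hconn⟩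
  · rw [Set.disjoint_left]
    intro v hv hvS
    exact absurd hv.out (by linarith [hnormlt v hvS])
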